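/- arXiv:2204.11208 — 6 statements merged into one kernel-verified Lean document; each statement's English description precedes it below -/
import Mathlib

section
/- Let q = 2^m with m ≥ 3 odd. The number of unordered pairs {x, y} of distinct elements of F_q \ {0,1} satisfying x·y^2 + y·x^2 + x + y = 0 (equivalently (y^2+1)x + (x^2+1)y = 0) is exactly (q−2)/2. -/
theorem stmt_6 {F : Type*} [Field F] [Fintype F] (m : ℕ) (hm : 3 ≤ m) (hodd : Odd m)
    (hcard : Fintype.card F = 2 ^ m) :
    Set.ncard {s : Finset F | s.card = 2 ∧ ∃ x ∈ s, ∃ y ∈ s, x ≠ y ∧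
      x ≠ 0 ∧ x ≠ 1 ∧ y ≠ 0 ∧ y ≠ 1 ∧ x * y ^ 2 + y * x ^ 2 + x + y = 0} =
      (2 ^ m - 2) / 2 := by
  classical
  have hch2 : (2 : F) = 0 := by
    have h := FiniteField.cast_card_eq_zero F
    rw [hcard] at h
    push_cast at h
    exact pow_eq_zero_iff (by omega) |>.mp h
  haveI : CharP F 2 := CharTwo.of_one_ne_zero_of_two_eq_zero one_ne_zero hch2
  have hinv : ∀ x : F, x ≠ 0 → x ≠ 1 → x⁻¹ ≠ x := by
    intro x hx0 hx1 h
    have hxx : x * x⁻¹ = 1 := mul_inv_cancel₀ hx0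
    rw [h] at hxx
    have h3 : (x + 1) ^ 2 = 0 := by linear_combination hxx + (x + 1) * hch2
    have h4 := pow_eq_zero_iff (n := 2) (by omega) |>.mp h3
    exact hx1 (by linear_combination h4 - hch2)
  set A : Finset F := Finset.univ.filter (fun x => x ≠ 0 ∧ x ≠ 1) with hA
  set f : F → Finset F := fun x => {x, x⁻¹} with hf
  have hmemA : ∀ x : F, x ∈ A ↔ x ≠ 0 ∧ x ≠ 1 := by
    intro x; simp [hA]
  have hfx : ∀ x : F, x ∈ A → (f x).card = 2 := by
    intro x hx
    obtain ⟨hx0, hx1⟩ := (hmemA x).mp hx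
    simp [hf, Finset.card_insert_of_notMem, (hinv x hx0 hx1).symm]
  have hinvA : ∀ x : F, x ∈ A → x⁻¹ ∈ A := by
    intro x hx
    obtain ⟨hx0, hx1⟩ := (hmemA x).mp hx
    exact (hmemA _).mpr ⟨inv_ne_zero hx0, by simpa using hx1⟩
  have hset : {s : Finset F | s.card = 2 ∧ ∃ x ∈ s, ∃ y ∈ s, x ≠ y ∧
      x ≠ 0 ∧ x ≠ 1 ∧ y ≠ 0 ∧ y ≠ 1 ∧ x * y ^ 2 + y * x ^ 2 + x + y = 0} = ↑(A.image f) := by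
    ext s
    simp only [Set.mem_setOf_eq, Finset.coe_image, Set.mem_image, Finset.mem_coe]
    constructor
    · rintro ⟨hs2, x, hxs, y, hys, hxy, hx0, hx1, hy0, hy1, heq⟩
      have hfac : (x + y) * (x * y + 1) = 0 := by linear_combination heq
      have hxy0 : x + y ≠ 0 := by
        intro h
        exact hxy (by linear_combination h - y * hch2)
      have hxy1 : x * y = 1 := by
        rcases mul_eq_zero.mp hfac with h | h
        · exact absurd h hxy0
        · linear_combination h - hch2
      have hyx : y = x⁻¹ := by
        field_simp
        linear_combination hxy1
      refine ⟨x, (hmemA x).mpr ⟨hx0, hx1⟩, ?_⟩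
      have hsub : ({x, y} : Finset F) ⊆ s := by
        intro z hz
        rcases Finset.mem_insert.mp hz with h | h
        · exact h ▸ hxs
        · exact (Finset.mem_singleton.mp h) ▸ hys
      have hcard2 : ({x, y} : Finset F).card = 2 := by
        simp [Finset.card_insert_of_notMem, hxy]
      have : ({x, y} : Finset F) = s :=
        Finset.eq_of_subset_of_card_le hsub (by omega)
      rw [← this, hyx, hf]
    · rintro ⟨x, hxA, rfl⟩
      obtain ⟨hx0, hx1⟩ := (hmemA x).mp hxA
      obtain ⟨hx0', hx1'⟩ := (hmemA _).mp (hinvA x hxA)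
      refine ⟨hfx x hxA, x, by simp [hf], x⁻¹, by simp [hf], (hinv x hx0 hx1).symm,
        hx0, hx1, hx0', hx1', ?_⟩
      field_simp
      linear_combination (1 + x ^ 2) * hch2
  rw [hset, Set.ncard_coe_finset]
  have hAcard : A.card = 2 ^ m - 2 := by
    have : A = Finset.univ \ {0, 1} := by
      ext x; simp [hA, and_comm]
    rw [this, Finset.card_sdiff_of_subset (Finset.subset_univ _), Finset.card_univ, hcard]
    simp
  have hfib : ∀ s ∈ A.image f, (A.filter (fun x => f x = s)).card = 2 := by
    intro s hs
    obtain ⟨x, hxA, rfl⟩ := Finset.mem_image.mp hs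
    obtain ⟨hx0, hx1⟩ := (hmemA x).mp hxA
    have : A.filter (fun y => f y = f x) = {x, x⁻¹} := by
      ext y
      simp only [Finset.mem_filter, Finset.mem_insert, Finset.mem_singleton]
      constructor
      · rintro ⟨hyA, hfy⟩
        have : y ∈ f x := by rw [← hfy]; simp [hf]
        simpa [hf] using this
      · rintro (rfl | rfl)
        · exact ⟨hxA, rfl⟩
        · refine ⟨hinvA x hxA, ?_⟩
          simp only [hf, inv_inv]
          rw [Finset.pair_comm]
    rw [this]
    simp [Finset.card_insert_of_notMem, (hinv x hx0 hx1).symm]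
  have hcount := Finset.card_eq_sum_card_fiberwise
    (f := f) (s := A) (t := A.image f) (fun x hx => Finset.mem_image_of_mem f hx)
  rw [Finset.sum_congr rfl hfib, Finset.sum_const, smul_eq_mul] at hcount
  have hp : 8 ≤ 2 ^ m := by
    calc (8 : ℕ) = 2 ^ 3 := by norm_num
    _ ≤ 2 ^ m := Nat.pow_le_pow_right (by norm_num) hm
  omega
end

section
/- Let q = 2^m with m ≥ 2 and let C be the linear code over F_q of length q+1 generated by the rows of the 3×(q+1) matrix whose first q−1 columns are (1, α, α^2)^T for α ∈ F_q^*, followed by columns (1,0,0)^T and (0,1,1)^T. Then every nonzero codeword of C has Hamming weight at least q−2. -/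
/-- Generator matrix with columns `(1, α, α²)ᵀ` for `α` ranging over the nonzero
elements of `F` (enumerated by `α`), followed by the columns `(1,0,0)ᵀ` and `(0,1,1)ᵀ`. -/
def genMatrix {F : Type*} [Field F] [Fintype F]
    (α : Fin (Fintype.card F - 1) → F) :
    Matrix (Fin 3) (Fin (Fintype.card F + 1)) F :=
  fun i j =>
    if h : (j : ℕ) < Fintype.card F - 1 then (α ⟨j, h⟩) ^ (i : ℕ)
    else if (j : ℕ) = Fintype.card F - 1 then (if i = 0 then 1 else 0)
    else (if i = 0 then 0 else 1)

theorem stmt_12 {F : Type*} [Field F] [Fintype F] [DecidableEq F] (m : ℕ) (hm : 2 ≤ m)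
    (hcard : Fintype.card F = 2 ^ m)
    (α : Fin (Fintype.card F - 1) → F) (hinj : Function.Injective α)
    (h0 : ∀ i, α i ≠ 0) :
    ∀ c ∈ (Submodule.span F (Set.range (genMatrix α)) :
        Submodule F (Fin (Fintype.card F + 1) → F)),
      c ≠ 0 → Fintype.card F - 2 ≤ hammingNorm c := by
  classical
  intro c hc hc0
  have hn4 : 4 ≤ Fintype.card F := by
    rw [hcard]
    calc 4 = 2 ^ 2 := by norm_num
      _ ≤ 2 ^ m := Nat.pow_le_pow_right (by norm_num) hm
  have two0 : (2 : F) = 0 := by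
    have h := FiniteField.cast_card_eq_zero F
    rw [hcard] at h
    push_cast at h
    exact (pow_eq_zero_iff (by omega)).mp h
  replace hc := (Submodule.mem_span_range_iff_exists_fun F
    (v := (genMatrix α : Fin 3 → Fin (Fintype.card F + 1) → F))).mp hc
  obtain ⟨g, hg⟩ := hc
  set a := g 0 with ha'
  set b := g 1 with hb'
  set d := g 2 with hd'
  have hcj : ∀ j, c j = a * genMatrix α 0 j + b * genMatrix α 1 j + d * genMatrix α 2 j := by
    intro j
    rw [← hg]
    simp [Fin.sum_univ_three]
    rfl
  have hlt : ∀ (j : Fin (Fintype.card F + 1)) (h : (j : ℕ) < Fintype.card F - 1),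
      c j = a + b * α ⟨j, h⟩ + d * α ⟨j, h⟩ ^ 2 := by
    intro j h
    rw [hcj]
    simp [genMatrix, h]
  have jq1 : Fin (Fintype.card F + 1) := ⟨Fintype.card F - 1, by omega⟩
  have heq1 : c ⟨Fintype.card F - 1, by omega⟩ = a := by
    rw [hcj]
    simp [genMatrix]
  have heq2 : c ⟨Fintype.card F, by omega⟩ = b + d := by
    rw [hcj]
    have h1 : ¬ (Fintype.card F < Fintype.card F - 1) := by omega
    have h2 : ¬ (Fintype.card F = Fintype.card F - 1) := by omega
    simp [genMatrix, h1, h2]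
  have habd : ¬ (a = 0 ∧ b = 0 ∧ d = 0) := by
    rintro ⟨h1, h2, h3⟩
    apply hc0
    funext j
    rw [hcj, h1, h2, h3]
    simp
  set Z : Finset (Fin (Fintype.card F + 1)) := Finset.univ.filter (fun j => c j = 0) with hZ
  have hsum : hammingNorm c + Z.card = Fintype.card F + 1 := by
    have := Finset.card_filter_add_card_filter_not (s := Finset.univ)
      (p := fun j => c j ≠ 0)
    simpa [hammingNorm, hZ, Finset.card_univ, not_not] using this
  suffices hZ3 : Z.card ≤ 3 by omega
  set Z1 : Finset (Fin (Fintype.card F + 1)) :=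
    Z.filter (fun j => (j : ℕ) < Fintype.card F - 1) with hZ1
  set S : Finset F := Finset.univ.filter (fun x => x ≠ 0 ∧ a + b * x + d * x ^ 2 = 0) with hS
  have hZ1S : Z1.card ≤ S.card := by
    refine Finset.card_le_card_of_injOn
      (fun j => if h : (j : ℕ) < Fintype.card F - 1 then α ⟨j, h⟩ else 0) ?_ ?_
    · intro j hj
      rw [Finset.mem_coe, hZ1, Finset.mem_filter, hZ, Finset.mem_filter] at hj
      obtain ⟨⟨-, hcz⟩, hjlt⟩ := hj
      simp only [dif_pos hjlt, hS, Finset.mem_coe, Finset.mem_filter]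
      refine ⟨Finset.mem_univ _, h0 _, ?_⟩
      rw [← hlt j hjlt]; exact hcz
    · intro j hj k hk hjk
      simp only [hZ1, Finset.coe_filter, Set.mem_setOf_eq] at hj hk
      simp only [dif_pos hj.2, dif_pos hk.2] at hjk
      have := hinj hjk
      exact Fin.ext (congrArg Fin.val this : ((⟨j, hj.2⟩ : Fin _) : ℕ) = _)
  have hmemS : ∀ x ∈ S, x ≠ 0 ∧ a + b * x + d * x ^ 2 = 0 := by
    intro x hx; rw [hS, Finset.mem_filter] at hx; exact hx.2
  by_cases hquad : d ≠ 0 ∧ b ≠ 0 ∧ a ≠ 0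
  · obtain ⟨hd, hb, ha⟩ := hquad
    -- quadratic case: at most 2 roots, and column q-1 is nonzero
    have hS2 : S.card ≤ 2 := by
      set p : Polynomial F := Polynomial.C d * Polynomial.X ^ 2 + Polynomial.C b * Polynomial.X
        + Polynomial.C a with hp'
      have hpdeg : p.natDegree = 2 := Polynomial.natDegree_quadratic hd
      have hpne : p ≠ 0 := by
        intro h; rw [h] at hpdeg; simp at hpdeg
      have hsub : S ⊆ p.roots.toFinset := by
        intro x hx
        obtain ⟨-, hx2⟩ := hmemS x hx
        rw [Multiset.mem_toFinset, Polynomial.mem_roots hpne]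
        simp only [Polynomial.IsRoot.def, hp', Polynomial.eval_add, Polynomial.eval_mul,
          Polynomial.eval_pow, Polynomial.eval_C, Polynomial.eval_X]
        linear_combination hx2
      calc S.card ≤ p.roots.toFinset.card := Finset.card_le_card hsub
        _ ≤ Multiset.card p.roots := Multiset.toFinset_card_le _
        _ ≤ p.natDegree := Polynomial.card_roots' p
        _ = 2 := hpdeg
    have hZsub : Z ⊆ Z1 ∪ {⟨Fintype.card F, by omega⟩} := by
      intro j hj
      rw [Finset.mem_union]
      by_cases hjlt : (j : ℕ) < Fintype.card F - 1
      · exact Or.inl (by rw [hZ1, Finset.mem_filter]; exact ⟨hj, hjlt⟩)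
      · right
        rw [Finset.mem_singleton]
        have hjv : (j : ℕ) = Fintype.card F - 1 ∨ (j : ℕ) = Fintype.card F := by
          have := j.isLt; omega
        rcases hjv with hjv | hjv
        · exfalso
          rw [hZ, Finset.mem_filter] at hj
          have : j = ⟨Fintype.card F - 1, by omega⟩ := Fin.ext hjv
          rw [this, heq1] at hj
          exact ha hj.2
        · exact Fin.ext hjv
    calc Z.card ≤ (Z1 ∪ {⟨Fintype.card F, by omega⟩}).card := Finset.card_le_card hZsub
      _ ≤ Z1.card + 1 := le_trans (Finset.card_union_le _ _) (by simp)
      _ ≤ S.card + 1 := by omega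
      _ ≤ 3 := by omega
  · -- degenerate cases: at most 1 root
    have hS1 : S.card ≤ 1 := by
      apply Finset.card_le_one.mpr
      intro x hx y hy
      obtain ⟨hx0, hx2⟩ := hmemS x hx
      obtain ⟨hy0, hy2⟩ := hmemS y hy
      by_cases hd : d = 0
      · by_cases hb : b = 0
        · exfalso
          have ha : a ≠ 0 := fun ha => habd ⟨ha, hb, hd⟩
          apply ha
          linear_combination hx2 - x * hb - x ^ 2 * hd
        · -- linear: x = y
          apply mul_left_cancel₀ hb
          linear_combination hx2 - hy2 - (x ^ 2 - y ^ 2) * hd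
      · by_cases hb : b = 0
        · -- x^2 = y^2 in char 2 forces x = y
          have hx2y2 : x ^ 2 = y ^ 2 := by
            apply mul_left_cancel₀ hd
            linear_combination hx2 - hy2 - (x - y) * hb
          have hxy0 : (x + y) ^ 2 = 0 := by
            linear_combination hx2y2 + (y ^ 2 + x * y) * two0
          have hxy : x + y = 0 := by
            exact (pow_eq_zero_iff (by norm_num)).mp hxy0
          linear_combination hxy - y * two0
        · have ha : a = 0 := by
            by_contra ha
            exact hquad ⟨hd, hb, ha⟩
          have hx' : b + d * x = 0 := by
            have hmul : x * (b + d * x) = 0 := by linear_combination hx2 - ha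
            exact (mul_eq_zero.mp hmul).resolve_left hx0
          have hy' : b + d * y = 0 := by
            have hmul : y * (b + d * y) = 0 := by linear_combination hy2 - ha
            exact (mul_eq_zero.mp hmul).resolve_left hy0
          apply mul_left_cancel₀ hd
          linear_combination hx' - hy'
    have hZsub : Z ⊆ Z1 ∪ {⟨Fintype.card F - 1, by omega⟩, ⟨Fintype.card F, by omega⟩} := by
      intro j hj
      rw [Finset.mem_union]
      by_cases hjlt : (j : ℕ) < Fintype.card F - 1
      · exact Or.inl (by rw [hZ1, Finset.mem_filter]; exact ⟨hj, hjlt⟩)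
      · right
        have hjv : (j : ℕ) = Fintype.card F - 1 ∨ (j : ℕ) = Fintype.card F := by
          have := j.isLt; omega
        rw [Finset.mem_insert, Finset.mem_singleton]
        rcases hjv with hjv | hjv
        · exact Or.inl (Fin.ext hjv)
        · exact Or.inr (Fin.ext hjv)
    calc Z.card ≤ _ := Finset.card_le_card hZsub
      _ ≤ Z1.card + 2 := le_trans (Finset.card_union_le _ _)
        (by gcongr; exact Finset.card_le_two)
      _ ≤ S.card + 2 := by omega
      _ ≤ 3 := by omega
end

section
/- Let q = 2^m with m ≥ 2 and let C be the linear code over F_q of length q+1 generated by the rows of the 3×(q+1) matrix whose first q−1 columns are (1, α, α^2)^T for α ∈ F_q^*, followed by columns (1,0,0)^T and (0,1,1)^T. Then C contains a codeword of Hamming weight exactly q−2, so the minimum distance of C is q−2. -/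
open Finset Polynomial

section helpers

variable {F : Type*} [Field F] [Fintype F] [DecidableEq F]

lemma gen_eval_lt (α : Fin (Fintype.card F - 1) → F) (a : Fin 3 → F)
    (j : Fin (Fintype.card F + 1)) (h : (j : ℕ) < Fintype.card F - 1) :
    (∑ i, a i • genMatrix α i) j
      = a 0 + a 1 * α ⟨j, h⟩ + a 2 * α ⟨j, h⟩ ^ 2 := by
  simp [genMatrix, Finset.sum_apply, Fin.sum_univ_three, dif_pos h]

lemma gen_eval_mid (α : Fin (Fintype.card F - 1) → F) (a : Fin 3 → F)
    (j : Fin (Fintype.card F + 1)) (h : (j : ℕ) = Fintype.card F - 1) :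
    (∑ i, a i • genMatrix α i) j = a 0 := by
  have h' : ¬ ((j : ℕ) < Fintype.card F - 1) := by omega
  simp [genMatrix, Finset.sum_apply, Fin.sum_univ_three, h', h]

lemma gen_eval_last (α : Fin (Fintype.card F - 1) → F) (a : Fin 3 → F)
    (j : Fin (Fintype.card F + 1)) (h' : ¬ ((j : ℕ) < Fintype.card F - 1))
    (h : (j : ℕ) ≠ Fintype.card F - 1) :
    (∑ i, a i • genMatrix α i) j = a 1 + a 2 := by
  simp [genMatrix, Finset.sum_apply, Fin.sum_univ_three, h', h]

lemma alpha_surj (α : Fin (Fintype.card F - 1) → F) (hinj : Function.Injective α)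
    (h0 : ∀ i, α i ≠ 0) {x : F} (hx : x ≠ 0) : ∃ i, α i = x := by
  have himg : (Finset.univ.image α) = Finset.univ.erase 0 := by
    apply Finset.eq_of_subset_of_card_le
    · intro y hy
      obtain ⟨i, _, rfl⟩ := Finset.mem_image.1 hy
      exact Finset.mem_erase.2 ⟨h0 i, Finset.mem_univ _⟩
    · rw [Finset.card_erase_of_mem (Finset.mem_univ _),
        Finset.card_image_of_injective _ hinj, Finset.card_univ, Finset.card_univ,
        Fintype.card_fin]
  have : x ∈ Finset.univ.image α := by
    rw [himg]; exact Finset.mem_erase.2 ⟨hx, Finset.mem_univ _⟩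
  obtain ⟨i, _, hi⟩ := Finset.mem_image.1 this
  exact ⟨i, hi⟩

end helpers

theorem stmt_13 {F : Type*} [Field F] [Fintype F] [DecidableEq F] (m : ℕ) (hm : 2 ≤ m)
    (hcard : Fintype.card F = 2 ^ m)
    (α : Fin (Fintype.card F - 1) → F) (hinj : Function.Injective α)
    (h0 : ∀ i, α i ≠ 0) :
    (∃ c ∈ (Submodule.span F (Set.range (genMatrix α)) :
        Submodule F (Fin (Fintype.card F + 1) → F)),
      c ≠ 0 ∧ hammingNorm c = Fintype.card F - 2) ∧
    ∀ c ∈ (Submodule.span F (Set.range (genMatrix α)) :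
        Submodule F (Fin (Fintype.card F + 1) → F)),
      c ≠ 0 → Fintype.card F - 2 ≤ hammingNorm c := by
  classical
  have h2 : (2 : F) = 0 := by
    have hc := FiniteField.cast_card_eq_zero F
    rw [hcard] at hc
    push_cast at hc
    exact pow_eq_zero_iff (by omega) |>.1 hc
  have hq4 : 4 ≤ Fintype.card F := by
    have : 2 ^ 2 ≤ 2 ^ m := Nat.pow_le_pow_right (by norm_num) hm
    omega
  -- the two special positions
  have hmidlt : Fintype.card F - 1 < Fintype.card F + 1 := by omega
  have hlastlt : Fintype.card F < Fintype.card F + 1 := by omega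
  set jmid : Fin (Fintype.card F + 1) := ⟨Fintype.card F - 1, hmidlt⟩ with hjmid
  set jlast : Fin (Fintype.card F + 1) := ⟨Fintype.card F, hlastlt⟩ with hjlast
  constructor
  · -- existence of a weight q-2 codeword
    obtain ⟨e, he0, he1⟩ : ∃ e : F, e ≠ 0 ∧ e ≠ 1 := by
      by_contra h
      push_neg at h
      have hsub : (Finset.univ : Finset F) ⊆ {0, 1} := by
        intro x _
        rcases eq_or_ne x 0 with rfl | hx
        · simp
        · simp [h x hx]
      have hle := Finset.card_le_card hsub
      have hle2 : ({0, 1} : Finset F).card ≤ 2 :=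
        (Finset.card_insert_le _ _).trans (by simp)
      rw [Finset.card_univ] at hle
      omega
    have he1' : e + 1 ≠ 0 := by
      intro h
      apply he1
      linear_combination h - h2
    set d : F := e ^ 2 + e with hd
    have hdne : d ≠ 0 := by
      have : d = e * (e + 1) := by ring
      rw [this]; exact mul_ne_zero he0 he1'
    obtain ⟨i1, hi1⟩ := alpha_surj α hinj h0 he0
    obtain ⟨i2, hi2⟩ := alpha_surj α hinj h0 he1'
    set a : Fin 3 → F := ![d, 1, 1] with ha
    set c0 : Fin (Fintype.card F + 1) → F := ∑ i, a i • genMatrix α i with hc0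
    have hmem : c0 ∈ (Submodule.span F (Set.range (genMatrix α)) :
        Submodule F (Fin (Fintype.card F + 1) → F)) :=
      Submodule.sum_mem _ fun i _ =>
        Submodule.smul_mem _ _ (Submodule.subset_span ⟨i, rfl⟩)
    have hroot : ∀ x : F, d + x + x ^ 2 = 0 ↔ (x = e ∨ x = e + 1) := by
      intro x
      have hfact : d + x + x ^ 2 = (x + e) * (x + (e + 1)) := by
        linear_combination (-(e * x)) * h2
      rw [hfact, mul_eq_zero]
      constructor
      · rintro (h | h)
        · left; linear_combination h - e * h2
        · right; linear_combination h - (e + 1) * h2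
      · rintro (h | h)
        · left; rw [h]; linear_combination e * h2
        · right; rw [h]; linear_combination (e + 1) * h2
    have hcmid : c0 jmid = d := by
      have := gen_eval_mid α a jmid rfl
      simpa [ha, hc0] using this
    have hc0ne : c0 ≠ 0 := by
      intro h
      apply hdne
      rw [← hcmid, h]; rfl
    set j1 : Fin (Fintype.card F + 1) := ⟨i1.1, by omega⟩ with hj1
    set j2 : Fin (Fintype.card F + 1) := ⟨i2.1, by omega⟩ with hj2
    have hvlt : ∀ (j : Fin (Fintype.card F + 1)) (h : (j : ℕ) < Fintype.card F - 1),
        c0 j = d + α ⟨j, h⟩ + α ⟨j, h⟩ ^ 2 := by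
      intro j h
      have := gen_eval_lt α a j h
      rw [hc0, this]
      simp [ha]
    have hZ : Finset.univ.filter (fun j => c0 j = 0) = {j1, j2, jlast} := by
      ext j
      simp only [Finset.mem_filter, Finset.mem_univ, true_and, Finset.mem_insert,
        Finset.mem_singleton]
      constructor
      · intro hj
        by_cases h : (j : ℕ) < Fintype.card F - 1
        · rw [hvlt j h] at hj
          rcases (hroot _).1 hj with hx | hx
          · left
            have : (⟨j, h⟩ : Fin (Fintype.card F - 1)) = i1 := hinj (by rw [hx, hi1])
            exact Fin.ext (by simpa using congrArg Fin.val this)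
          · right; left
            have : (⟨j, h⟩ : Fin (Fintype.card F - 1)) = i2 := hinj (by rw [hx, hi2])
            exact Fin.ext (by simpa using congrArg Fin.val this)
        · by_cases h' : (j : ℕ) = Fintype.card F - 1
          · exfalso
            have hj' : c0 j = d := by
              have := gen_eval_mid α a j h'
              simpa [ha, hc0] using this
            exact hdne (by rw [← hj', hj])
          · right; right
            have := j.2
            exact Fin.ext (by simp [hjlast] <;> omega)
      · rintro (rfl | rfl | rfl)
        · have h : ((j1 : ℕ)) < Fintype.card F - 1 := i1.2
          rw [hvlt j1 h]
          have : (⟨(j1 : ℕ), h⟩ : Fin (Fintype.card F - 1)) = i1 := Fin.ext rfl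
          rw [this, hi1]
          exact (hroot e).2 (Or.inl rfl)
        · have h : ((j2 : ℕ)) < Fintype.card F - 1 := i2.2
          rw [hvlt j2 h]
          have : (⟨(j2 : ℕ), h⟩ : Fin (Fintype.card F - 1)) = i2 := Fin.ext rfl
          rw [this, hi2]
          exact (hroot (e + 1)).2 (Or.inr rfl)
        · have h' : ¬ ((jlast : ℕ) < Fintype.card F - 1) := by simp [hjlast] <;> omega
          have h'' : (jlast : ℕ) ≠ Fintype.card F - 1 := by simp [hjlast] <;> omega
          have := gen_eval_last α a jlast h' h''
          rw [hc0, this]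
          have h11 : (1 : F) + 1 = 0 := by linear_combination h2
          simpa [ha] using h11
    have hj12 : j1 ≠ j2 := by
      intro h
      have hii : i1 = i2 := Fin.ext (by simpa [hj1, hj2, Fin.ext_iff] using h)
      have hee := congrArg α hii
      rw [hi1, hi2] at hee
      exact one_ne_zero (by linear_combination -hee)
    have hj1l : j1 ≠ jlast := by
      have := i1.2
      exact Fin.ne_of_val_ne (by simp [hj1, hjlast] <;> omega)
    have hj2l : j2 ≠ jlast := by
      have := i2.2
      exact Fin.ne_of_val_ne (by simp [hj2, hjlast] <;> omega)
    have hcard3 : ({j1, j2, jlast} : Finset (Fin (Fintype.card F + 1))).card = 3 := by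
      rw [Finset.card_insert_of_notMem (by simp [hj12, hj1l]),
        Finset.card_insert_of_notMem (by simp [hj2l]), Finset.card_singleton]
    have hpart := Finset.card_filter_add_card_filter_not
      (s := (Finset.univ : Finset (Fin (Fintype.card F + 1)))) (p := fun j => c0 j = 0)
    rw [hZ, hcard3, Finset.card_univ, Fintype.card_fin] at hpart
    have hnorm : hammingNorm c0 = Fintype.card F - 2 := by
      have : hammingNorm c0 = (Finset.univ.filter (fun j => ¬ (c0 j = 0))).card := rfl
      omega
    exact ⟨c0, hmem, hc0ne, hnorm⟩
  · -- lower bound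
    intro c hc hcne
    replace hc := (Submodule.mem_span_range_iff_exists_fun F).1 hc
    obtain ⟨a, ha⟩ := hc
    set P : Polynomial F := C (a 2) * X ^ 2 + C (a 1) * X + C (a 0) with hP
    have hcoeff0 : P.coeff 0 = a 0 := by simp [hP]
    have hcoeff1 : P.coeff 1 = a 1 := by simp [hP]
    have hcoeff2 : P.coeff 2 = a 2 := by simp [hP]
    have hPne : P ≠ 0 := by
      intro h
      apply hcne
      have h0' : a 0 = 0 := by rw [← hcoeff0, h, Polynomial.coeff_zero]
      have h1' : a 1 = 0 := by rw [← hcoeff1, h, Polynomial.coeff_zero]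
      have h2' : a 2 = 0 := by rw [← hcoeff2, h, Polynomial.coeff_zero]
      rw [← ha, Fin.sum_univ_three, h0', h1', h2']
      simp
    have heval : ∀ x : F, P.eval x = a 0 + a 1 * x + a 2 * x ^ 2 := by
      intro x; simp [hP]; ring
    set S : Finset (Fin (Fintype.card F - 1)) :=
      Finset.univ.filter (fun i => P.eval (α i) = 0) with hS
    have hSsub : S.image α ⊆ P.roots.toFinset := by
      intro x hx
      obtain ⟨i, hi, rfl⟩ := Finset.mem_image.1 hx
      rw [Multiset.mem_toFinset, Polynomial.mem_roots hPne]
      exact (Finset.mem_filter.1 hi).2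
    have hcardR : P.roots.toFinset.card ≤ 2 :=
      (Multiset.toFinset_card_le _).trans ((Polynomial.card_roots' P).trans
        Polynomial.natDegree_quadratic_le)
    have hScard : S.card ≤ 2 := by
      rw [← Finset.card_image_of_injective S hinj]
      exact (Finset.card_le_card hSsub).trans hcardR
    set φ : Fin (Fintype.card F - 1) → Fin (Fintype.card F + 1) :=
      fun i => ⟨i.1, by omega⟩ with hφ
    set Z : Finset (Fin (Fintype.card F + 1)) :=
      Finset.univ.filter (fun j => c j = 0) with hZdef
    have hmemS : ∀ (j : Fin (Fintype.card F + 1)) (h : (j : ℕ) < Fintype.card F - 1),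
        c j = 0 → j ∈ S.image φ := by
      intro j h hj
      refine Finset.mem_image.2 ⟨⟨j.1, h⟩, ?_, Fin.ext rfl⟩
      rw [hS, Finset.mem_filter]
      refine ⟨Finset.mem_univ _, ?_⟩
      rw [heval]
      rw [← ha] at hj
      rw [gen_eval_lt α a j h] at hj
      exact hj
    have hZcard : Z.card ≤ 3 := by
      by_cases ha0 : a 0 = 0
      · -- 0 is a root, so at most one nonzero root
        have h0root : (0 : F) ∈ P.roots.toFinset := by
          rw [Multiset.mem_toFinset, Polynomial.mem_roots hPne]
          show P.eval 0 = 0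
          rw [heval]; simp [ha0]
        have hSsub' : S.image α ⊆ (P.roots.toFinset).erase 0 := by
          intro x hx
          obtain ⟨i, hi, rfl⟩ := Finset.mem_image.1 hx
          exact Finset.mem_erase.2 ⟨h0 i, hSsub hx⟩
        have hS1 : S.card ≤ 1 := by
          rw [← Finset.card_image_of_injective S hinj]
          have := Finset.card_le_card hSsub'
          have hE := Finset.card_erase_of_mem h0root
          omega
        have hZsub : Z ⊆ S.image φ ∪ {jmid, jlast} := by
          intro j hj
          have hj' : c j = 0 := (Finset.mem_filter.1 hj).2
          by_cases h : (j : ℕ) < Fintype.card F - 1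
          · exact Finset.mem_union_left _ (hmemS j h hj')
          · refine Finset.mem_union_right _ ?_
            simp only [Finset.mem_insert, Finset.mem_singleton]
            have := j.2
            by_cases h' : (j : ℕ) = Fintype.card F - 1
            · exact Or.inl (Fin.ext (by simp [hjmid, h'] <;> omega))
            · exact Or.inr (Fin.ext (by simp [hjlast] <;> omega))
        calc Z.card ≤ (S.image φ ∪ {jmid, jlast}).card := Finset.card_le_card hZsub
          _ ≤ (S.image φ).card + ({jmid, jlast} : Finset _).card := Finset.card_union_le _ _
          _ ≤ S.card + 2 := by
              have h1 := Finset.card_image_le (s := S) (f := φ)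
              have h2' : ({jmid, jlast} : Finset _).card ≤ 2 :=
                (Finset.card_insert_le _ _).trans (by simp)
              omega
          _ ≤ 3 := by omega
      · -- a 0 ≠ 0 : position jmid is nonzero
        have hZsub : Z ⊆ S.image φ ∪ {jlast} := by
          intro j hj
          have hj' : c j = 0 := (Finset.mem_filter.1 hj).2
          by_cases h : (j : ℕ) < Fintype.card F - 1
          · exact Finset.mem_union_left _ (hmemS j h hj')
          · refine Finset.mem_union_right _ ?_
            simp only [Finset.mem_singleton]
            have := j.2
            by_cases h' : (j : ℕ) = Fintype.card F - 1
            · exfalso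
              apply ha0
              rw [← ha] at hj'
              rw [gen_eval_mid α a j h'] at hj'
              exact hj'
            · exact Fin.ext (by simp [hjlast] <;> omega)
        calc Z.card ≤ (S.image φ ∪ {jlast}).card := Finset.card_le_card hZsub
          _ ≤ (S.image φ).card + ({jlast} : Finset _).card := Finset.card_union_le _ _
          _ ≤ 2 + 1 := by
              have h1 := Finset.card_image_le (s := S) (f := φ)
              simp only [Finset.card_singleton]
              omega
          _ = 3 := rfl
    have hpart := Finset.card_filter_add_card_filter_not
      (s := (Finset.univ : Finset (Fin (Fintype.card F + 1)))) (p := fun j => c j = 0)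
    rw [Finset.card_univ, Fintype.card_fin] at hpart
    have : hammingNorm c = (Finset.univ.filter (fun j => ¬ (c j = 0))).card := rfl
    rw [hZdef] at hZcard
    omega
end

section
/- Let q = 2^m with m ≥ 2 and let C be the [q+1, 3] linear code over F_q generated by the matrix with columns (1, α, α^2)^T for α ∈ F_q^* followed by (1,0,0)^T and (0,1,1)^T. Then the dual code C⊥ has minimum distance 3; in particular, any two columns of the generator matrix are linearly independent over F_q, and there exist three linearly dependent columns. -/
section Aux
variable {F : Type*} [Field F] [Fintype F]

lemma gen_small (α : Fin (Fintype.card F - 1) → F) {j : Fin (Fintype.card F + 1)}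
    (h : (j : ℕ) < Fintype.card F - 1) (i : Fin 3) :
    genMatrix α i j = (α ⟨j, h⟩) ^ (i : ℕ) := by simp [genMatrix, h]

lemma gen_mid (α : Fin (Fintype.card F - 1) → F) {j : Fin (Fintype.card F + 1)}
    (h : (j : ℕ) = Fintype.card F - 1) (i : Fin 3) :
    genMatrix α i j = (if i = 0 then 1 else 0) := by
  simp [genMatrix, h]

lemma gen_last (α : Fin (Fintype.card F - 1) → F) {j : Fin (Fintype.card F + 1)}
    (h : (j : ℕ) = Fintype.card F) (i : Fin 3) :
    genMatrix α i j = (if i = 0 then 0 else 1) := by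
  have h2 : 2 ≤ Fintype.card F := Fintype.one_lt_card
  rw [genMatrix]
  rw [dif_neg (by omega), if_neg (by omega)]

lemma gen_mid0 (α : Fin (Fintype.card F - 1) → F) {j : Fin (Fintype.card F + 1)}
    (h : (j : ℕ) = Fintype.card F - 1) : genMatrix α 0 j = 1 := by
  rw [gen_mid α h]; norm_num

lemma gen_mid1 (α : Fin (Fintype.card F - 1) → F) {j : Fin (Fintype.card F + 1)}
    (h : (j : ℕ) = Fintype.card F - 1) : genMatrix α 1 j = 0 := by
  rw [gen_mid α h, if_neg (by decide)]

lemma gen_last0 (α : Fin (Fintype.card F - 1) → F) {j : Fin (Fintype.card F + 1)}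
    (h : (j : ℕ) = Fintype.card F) : genMatrix α 0 j = 0 := by
  rw [gen_last α h]; norm_num

lemma gen_last1 (α : Fin (Fintype.card F - 1) → F) {j : Fin (Fintype.card F + 1)}
    (h : (j : ℕ) = Fintype.card F) : genMatrix α 1 j = 1 := by
  rw [gen_last α h, if_neg (by decide)]

/-- Any two distinct columns are linearly independent (coefficients form). -/
lemma key (α : Fin (Fintype.card F - 1) → F) (hinj : Function.Injective α)
    (h0 : ∀ i, α i ≠ 0) (j1 j2 : Fin (Fintype.card F + 1)) (hne : j1 ≠ j2) (s t : F)
    (h : ∀ i, s * genMatrix α i j1 + t * genMatrix α i j2 = 0) : s = 0 ∧ t = 0 := by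
  have h2 : 2 ≤ Fintype.card F := Fintype.one_lt_card
  have hj1 : (j1 : ℕ) < Fintype.card F + 1 := j1.isLt
  have hj2 : (j2 : ℕ) < Fintype.card F + 1 := j2.isLt
  have hnev : (j1 : ℕ) ≠ (j2 : ℕ) := fun hv => hne (Fin.ext hv)
  by_cases c1 : (j1 : ℕ) < Fintype.card F - 1 <;>
    by_cases c2 : (j2 : ℕ) < Fintype.card F - 1
  · -- both small
    have e0 := h 0; have e1 := h 1
    rw [gen_small α c1, gen_small α c2] at e0 e1
    simp only [Fin.val_zero, pow_zero, Fin.val_one, pow_one, mul_one] at e0 e1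
    have hxy : α ⟨j1, c1⟩ ≠ α ⟨j2, c2⟩ := fun he => hnev (by simpa using hinj he)
    have hs : s = 0 := by
      have hz : s * (α ⟨j1, c1⟩ - α ⟨j2, c2⟩) = 0 := by linear_combination e1 - α ⟨j2, c2⟩ * e0
      rcases mul_eq_zero.mp hz with h' | h'
      · exact h'
      · exact absurd (sub_eq_zero.mp h') hxy
    exact ⟨hs, by linear_combination e0 - hs⟩
  · -- j1 small, j2 mid or last
    have e0 := h 0; have e1 := h 1
    rw [gen_small α c1] at e0 e1
    simp only [Fin.val_zero, pow_zero, mul_one, Fin.val_one, pow_one] at e0 e1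
    by_cases cm : (j2 : ℕ) = Fintype.card F - 1
    · rw [gen_mid0 α cm] at e0
      rw [gen_mid1 α cm, mul_zero, add_zero] at e1
      rw [mul_one] at e0
      have hs : s = 0 := by
        rcases mul_eq_zero.mp e1 with h' | h'
        · exact h'
        · exact absurd h' (h0 _)
      exact ⟨hs, by linear_combination e0 - hs⟩
    · have cl : (j2 : ℕ) = Fintype.card F := by omega
      rw [gen_last0 α cl, mul_zero, add_zero] at e0
      rw [gen_last1 α cl, mul_one] at e1
      exact ⟨e0, by linear_combination e1 - α ⟨j1, c1⟩ * e0⟩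
  · -- j2 small, j1 mid or last : symmetric
    have := key α hinj h0 j2 j1 (Ne.symm hne) t s (fun i => by linear_combination h i)
    exact ⟨this.2, this.1⟩
  · -- neither small: one is mid, other last
    have e0 := h 0; have e1 := h 1
    by_cases cm : (j1 : ℕ) = Fintype.card F - 1
    · have cl : (j2 : ℕ) = Fintype.card F := by omega
      rw [gen_mid0 α cm, gen_last0 α cl, mul_one, mul_zero, add_zero] at e0
      rw [gen_mid1 α cm, gen_last1 α cl, mul_zero, zero_add, mul_one] at e1
      exact ⟨e0, e1⟩
    · have cl : (j1 : ℕ) = Fintype.card F := by omega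
      have cm2 : (j2 : ℕ) = Fintype.card F - 1 := by omega
      rw [gen_last0 α cl, gen_mid0 α cm2, mul_zero, zero_add, mul_one] at e0
      rw [gen_last1 α cl, gen_mid1 α cm2, mul_one, mul_zero, add_zero] at e1
      exact ⟨e1, e0⟩

lemma dual_iff (α : Fin (Fintype.card F - 1) → F) (v : Fin (Fintype.card F + 1) → F) :
    (∀ c ∈ (Submodule.span F (Set.range (genMatrix α)) :
        Submodule F (Fin (Fintype.card F + 1) → F)), ∑ j, v j * c j = 0)
    ↔ ∀ i, ∑ j, v j * genMatrix α i j = 0 := by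
  constructor
  · intro h i; exact h _ (Submodule.subset_span ⟨i, rfl⟩)
  · intro h c hc
    induction hc using Submodule.span_induction with
    | mem c hc => obtain ⟨i, rfl⟩ := hc; exact h i
    | zero => simp
    | add x y hx hy ihx ihy => simp only [Pi.add_apply, mul_add, Finset.sum_add_distrib, ihx, ihy, add_zero]
    | smul a x hx ih => simp only [Pi.smul_apply, smul_eq_mul, mul_left_comm, ← Finset.mul_sum, ih, mul_zero]

end Aux

theorem stmt_14 {F : Type*} [Field F] [Fintype F] [DecidableEq F] (m : ℕ) (hm : 2 ≤ m)
    (hcard : Fintype.card F = 2 ^ m)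
    (α : Fin (Fintype.card F - 1) → F) (hinj : Function.Injective α)
    (h0 : ∀ i, α i ≠ 0) :
    (∀ v : Fin (Fintype.card F + 1) → F,
        (∀ c ∈ (Submodule.span F (Set.range (genMatrix α)) :
          Submodule F (Fin (Fintype.card F + 1) → F)), ∑ j, v j * c j = 0) →
        v ≠ 0 → 3 ≤ hammingNorm v) ∧
    (∃ v : Fin (Fintype.card F + 1) → F,
        (∀ c ∈ (Submodule.span F (Set.range (genMatrix α)) :
          Submodule F (Fin (Fintype.card F + 1) → F)), ∑ j, v j * c j = 0) ∧
        hammingNorm v = 3) ∧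
    (∀ j1 j2 : Fin (Fintype.card F + 1), j1 ≠ j2 →
        LinearIndependent F ![fun i => genMatrix α i j1, fun i => genMatrix α i j2]) ∧
    (∃ j1 j2 j3 : Fin (Fintype.card F + 1), j1 ≠ j2 ∧ j1 ≠ j3 ∧ j2 ≠ j3 ∧
        ∃ c1 c2 c3 : F, ¬(c1 = 0 ∧ c2 = 0 ∧ c3 = 0) ∧
          ∀ i : Fin 3,
            c1 * genMatrix α i j1 + c2 * genMatrix α i j2 + c3 * genMatrix α i j3 = 0) := by
  have hq4 : 4 ≤ Fintype.card F := by
    calc 4 = 2 ^ 2 := rfl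
    _ ≤ 2 ^ m := Nat.pow_le_pow_right (by norm_num) hm
    _ = Fintype.card F := hcard.symm
  have hchar : (1 : F) + 1 = 0 := by
    have h := FiniteField.cast_card_eq_zero F
    rw [hcard] at h
    push_cast at h
    have h2 : (2 : F) = 0 := pow_eq_zero_iff (n := m) (by omega) |>.mp h
    linear_combination h2
  -- α is surjective onto nonzero elements; find preimage of 1
  obtain ⟨j0, hj0⟩ : ∃ j, α j = 1 := by
    let α' : Fin (Fintype.card F - 1) → {x : F // x ≠ 0} := fun j => ⟨α j, h0 j⟩
    have hinj' : Function.Injective α' := fun a b hab => hinj (Subtype.ext_iff.mp hab)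
    have hcard' : Fintype.card {x : F // x ≠ 0} = Fintype.card F - 1 := by
      rw [Fintype.card_subtype_compl, Fintype.card_subtype_eq]
    have hbij : Function.Bijective α' := by
      rw [Fintype.bijective_iff_injective_and_card]
      exact ⟨hinj', by simp [hcard']⟩
    obtain ⟨j, hj⟩ := hbij.2 ⟨1, one_ne_zero⟩
    exact ⟨j, Subtype.ext_iff.mp hj⟩
  have hj0lt : (j0 : ℕ) < Fintype.card F - 1 := j0.isLt
  -- the three special columns
  let ja : Fin ((Fintype.card F) + 1) := ⟨(j0 : ℕ), by omega⟩
  let jb : Fin ((Fintype.card F) + 1) := ⟨(Fintype.card F) - 1, by omega⟩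
  let jc : Fin ((Fintype.card F) + 1) := ⟨(Fintype.card F), by omega⟩
  have hab : ja ≠ jb := by simp only [ja, jb, Ne, Fin.mk.injEq]; omega
  have hac : ja ≠ jc := by simp only [ja, jc, Ne, Fin.mk.injEq]; omega
  have hbc : jb ≠ jc := by simp only [jb, jc, Ne, Fin.mk.injEq]; omega
  have hja : (ja : ℕ) < (Fintype.card F) - 1 := hj0lt
  have hja' : α ⟨(ja : ℕ), hja⟩ = 1 := by
    have : (⟨(ja : ℕ), hja⟩ : Fin ((Fintype.card F) - 1)) = j0 := rfl
    rw [this, hj0]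
  -- column sum identity
  have triple : ∀ i : Fin 3,
      genMatrix α i ja + genMatrix α i jb + genMatrix α i jc = 0 := by
    intro i
    rw [gen_small α hja, gen_mid α rfl, gen_last α rfl, hja', one_pow]
    fin_cases i <;> simp <;> linear_combination hchar
  refine ⟨?_, ?_, ?_, ?_⟩
  · -- min weight ≥ 3
    intro v hdual hv
    rw [dual_iff] at hdual
    by_contra hlt
    push_neg at hlt
    set S := Finset.univ.filter (fun j => v j ≠ 0) with hS
    have hSnorm : hammingNorm v = S.card := rfl
    have hmem : ∀ j, j ∈ S ↔ v j ≠ 0 := by intro j; simp [hS]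
    have hS2 : S.card ≤ 2 := by omega
    have hSne : S.Nonempty := by
      obtain ⟨j, hj⟩ := Function.ne_iff.mp hv
      exact ⟨j, (hmem j).mpr hj⟩
    have hsum : ∀ i, ∑ j ∈ S, v j * genMatrix α i j = 0 := by
      intro i
      rw [← hdual i]
      refine Finset.sum_subset (Finset.subset_univ S) fun j _ hj => ?_
      rw [not_not.mp (fun h => hj ((hmem j).mpr h)), zero_mul]
    have h1 : 1 ≤ S.card := Finset.card_pos.mpr hSne
    interval_cases hc : S.card
    · obtain ⟨a, ha⟩ := Finset.card_eq_one.mp hc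
      have hva : v a ≠ 0 := (hmem a).mp (ha ▸ Finset.mem_singleton_self a)
      -- pick b ≠ a
      have : ∃ b : Fin ((Fintype.card F) + 1), b ≠ a := by
        rcases eq_or_ne a ja with rfl | h
        · exact ⟨jb, fun hh => hab hh.symm⟩
        · exact ⟨ja, fun hh => h hh.symm⟩
      obtain ⟨b, hb⟩ := this
      have := key α hinj h0 a b (Ne.symm hb) (v a) 0 (fun i => by
        have := hsum i
        rw [ha, Finset.sum_singleton] at this
        rw [zero_mul, add_zero]; exact this)
      exact hva this.1
    · obtain ⟨a, b, hab', hS'⟩ := Finset.card_eq_two.mp hc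
      have hva : v a ≠ 0 := (hmem a).mp (hS' ▸ by simp)
      have := key α hinj h0 a b hab' (v a) (v b) (fun i => by
        have := hsum i
        rw [hS', Finset.sum_pair hab'] at this
        exact this)
      exact hva this.1
  · -- weight-3 dual word
    classical
    set T : Finset (Fin ((Fintype.card F) + 1)) := {ja, jb, jc} with hT
    refine ⟨fun j => if j ∈ T then 1 else 0, ?_, ?_⟩
    · rw [dual_iff]
      intro i
      have : ∑ j, (if j ∈ T then (1:F) else 0) * genMatrix α i j
          = ∑ j ∈ T, genMatrix α i j := by
        calc ∑ j, (if j ∈ T then (1:F) else 0) * genMatrix α i j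
            = ∑ j, (if j ∈ T then genMatrix α i j else 0) := by
              refine Finset.sum_congr rfl fun j _ => ?_
              split <;> simp
          _ = ∑ j ∈ Finset.univ ∩ T, genMatrix α i j := Finset.sum_ite_mem _ _ _
          _ = ∑ j ∈ T, genMatrix α i j := by rw [Finset.univ_inter]
      rw [this, hT, Finset.sum_insert (by simp [hab, hac]),
        Finset.sum_pair hbc]
      linear_combination triple i
    · have hfil : Finset.univ.filter
          (fun j => (if j ∈ T then (1:F) else 0) ≠ 0) = T := by
        ext j
        by_cases hj : j ∈ T <;> simp [hj]
      rw [show hammingNorm (fun j => if j ∈ T then (1:F) else 0)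
          = (Finset.univ.filter (fun j => (if j ∈ T then (1:F) else 0) ≠ 0)).card from rfl,
        hfil, hT]
      rw [Finset.card_insert_of_notMem (by simp [hab, hac]), Finset.card_pair hbc]
  · -- pairwise linear independence
    intro j1 j2 hne
    rw [LinearIndependent.pair_iff]
    intro s t hst
    refine key α hinj h0 j1 j2 hne s t fun i => ?_
    have := congrFun hst i
    simpa using this
  · exact ⟨ja, jb, jc, hab, hac, hbc, 1, 1, 1, by simp, fun i => by
      rw [one_mul, one_mul, one_mul]; exact triple i⟩
end

section
/- Let C be an [n, k, n−k] near-MDS code over F_q (i.e., both C and its dual have parameters attaining Singleton defect 1). Then for s ∈ {1, …, k}, the number of codewords of weight n−k+s in C satisfies A_{n−k+s} = binom(n, k−s) · Σ_{j=0}^{s−1} (−1)^j binom(n−k+s, j)(q^{s−j} − 1) + (−1)^s binom(k, s) A_{n−k}. -/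
set_option linter.unusedSectionVars false
set_option maxHeartbeats 1000000

open Finset

namespace NMDSaux




open Finset



variable {α : Type*} [DecidableEq α]

lemma neg_one_pow_sub (a b : ℕ) (h : b ≤ a) :
    ((-1 : ℤ)) ^ (a - b) = (-1) ^ a * (-1) ^ b := by
  have h1 : ((-1 : ℤ)) ^ a = (-1) ^ (a - b) * (-1) ^ b := by
    rw [← pow_add, Nat.sub_add_cancel h]
  rw [h1, mul_assoc, ← pow_add, ← two_mul, pow_mul]
  norm_num

lemma inner_sign (T R : Finset α) (hR : R ⊆ T) :
    ∑ S ∈ T.powerset.filter (fun S => R ⊆ S), (-1 : ℤ) ^ (T.card - S.card)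
      = if R = T then 1 else 0 := by
  have key : ∑ S ∈ T.powerset.filter (fun S => R ⊆ S), (-1 : ℤ) ^ (T.card - S.card)
      = ∑ U ∈ (T \ R).powerset, (-1 : ℤ) ^ ((T \ R).card - U.card) := by
    apply Finset.sum_nbij' (i := fun S => S \ R) (j := fun U => U ∪ R)
    · intro S hS
      simp only [mem_filter, mem_powerset] at hS
      exact mem_powerset.2 (sdiff_subset_sdiff hS.1 le_rfl)
    · intro U hU
      simp only [mem_powerset] at hU
      have hUT : U ⊆ T := hU.trans (sdiff_subset)
      simp only [mem_filter, mem_powerset]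
      exact ⟨union_subset hUT hR, subset_union_right⟩
    · intro S hS
      simp only [mem_filter, mem_powerset] at hS
      exact sdiff_union_of_subset hS.2
    · intro U hU
      simp only [mem_powerset] at hU
      apply union_sdiff_cancel_right
      rw [Finset.disjoint_left]
      intro x hx
      exact (mem_sdiff.1 (hU hx)).2
    · intro S hS
      simp only [mem_filter, mem_powerset] at hS
      congr 1
      rw [card_sdiff_of_subset hS.2, card_sdiff_of_subset (hS.2.trans hS.1)]
      have := card_le_card hS.1
      have := card_le_card hS.2
      have := card_le_card (hS.2.trans hS.1)
      omega
  rw [key]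
  have h2 : ∀ U ∈ (T \ R).powerset, (-1 : ℤ) ^ ((T \ R).card - U.card)
      = (-1 : ℤ) ^ (T \ R).card * (-1) ^ U.card := fun U hU =>
    neg_one_pow_sub _ _ (card_le_card (mem_powerset.1 hU))
  rw [sum_congr rfl h2, ← mul_sum, sum_powerset_neg_one_pow_card]
  by_cases h : T \ R = ∅
  · have : R = T := le_antisymm hR (sdiff_eq_empty_iff_subset.1 h)
    simp [h, this]
  · have : R ≠ T := by
      intro he; exact h (by simp [he])
    simp [h, this]

lemma mobius (g e : Finset α → ℤ) (h : ∀ S, g S = ∑ R ∈ S.powerset, e R) (T : Finset α) :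
    e T = ∑ S ∈ T.powerset, (-1 : ℤ) ^ (T.card - S.card) * g S := by
  have expand : ∑ S ∈ T.powerset, (-1 : ℤ) ^ (T.card - S.card) * g S
      = ∑ S ∈ T.powerset, ∑ R ∈ S.powerset, (-1 : ℤ) ^ (T.card - S.card) * e R := by
    refine sum_congr rfl fun S _ => ?_
    rw [h S, mul_sum]
  rw [expand]
  have h1 : ∀ S ∈ T.powerset, ∑ R ∈ S.powerset, (-1 : ℤ) ^ (T.card - S.card) * e R
      = ∑ R ∈ T.powerset, if R ⊆ S then (-1 : ℤ) ^ (T.card - S.card) * e R else 0 := by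
    intro S hS
    rw [← sum_filter]
    apply sum_congr _ (fun _ _ => rfl)
    ext R
    simp only [mem_powerset, mem_filter]
    rw [mem_powerset] at hS
    exact ⟨fun hR => ⟨hR.trans hS, hR⟩, fun hR => hR.2⟩
  rw [sum_congr rfl h1, sum_comm]
  have h2 : ∀ R ∈ T.powerset,
      (∑ S ∈ T.powerset, if R ⊆ S then (-1 : ℤ) ^ (T.card - S.card) * e R else 0)
        = (if R = T then 1 else 0) * e R := by
    intro R hR
    rw [← sum_filter, ← sum_mul, inner_sign T R (mem_powerset.1 hR)]
  rw [sum_congr rfl h2]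
  rw [Finset.sum_eq_single T]
  · simp
  · intro R _ hne; simp [hne]
  · intro habs; exact absurd (mem_powerset_self T) habs

lemma swap_powersetCard [Fintype α] (t : ℕ) (H : Finset α → ℤ) :
    ∑ T ∈ powersetCard t (univ : Finset α), ∑ S ∈ T.powerset, H S
      = ∑ S ∈ (univ : Finset α).powerset,
          H S * ((powersetCard t (univ : Finset α)).filter (fun T => S ⊆ T)).card := by
  have h1 : ∀ T ∈ powersetCard t (univ : Finset α),
      ∑ S ∈ T.powerset, H S = ∑ S ∈ (univ : Finset α).powerset, if S ⊆ T then H S else 0 := by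
    intro T _
    rw [← sum_filter]
    apply sum_congr _ (fun _ _ => rfl)
    ext S
    simp [mem_powerset]
  rw [sum_congr rfl h1, sum_comm]
  refine sum_congr rfl fun S _ => ?_
  rw [← sum_filter, sum_const, nsmul_eq_mul, mul_comm]

lemma count_supersets [Fintype α] (t : ℕ) (S : Finset α) (h : S.card ≤ t) :
    ((powersetCard t (univ : Finset α)).filter (fun T => S ⊆ T)).card
      = (Fintype.card α - S.card).choose (t - S.card) := by
  rw [← Finset.card_compl S, ← card_powersetCard]
  apply Finset.card_nbij' (i := fun T => T \ S) (j := fun U => U ∪ S)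
  · intro T hT
    simp only [mem_coe, mem_filter, mem_powersetCard] at hT
    simp only [mem_coe, mem_powersetCard]
    constructor
    · intro x hx
      simp only [mem_sdiff] at hx
      simp [mem_compl, hx.2]
    · rw [card_sdiff_of_subset hT.2, hT.1.2]
  · intro U hU
    simp only [mem_coe, mem_powersetCard] at hU
    have hdisj : Disjoint U S := by
      rw [Finset.disjoint_left]
      intro x hx
      have := hU.1 hx
      simpa [mem_compl] using this
    simp only [mem_coe, mem_filter, mem_powersetCard]
    refine ⟨⟨subset_univ _, ?_⟩, subset_union_right⟩
    rw [card_union_of_disjoint hdisj, hU.2]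
    have : S.card ≤ Fintype.card α := by
      simpa using card_le_univ S
    omega
  · intro T hT
    simp only [mem_coe, mem_filter] at hT
    exact sdiff_union_of_subset hT.2
  · intro U hU
    simp only [mem_coe, mem_powersetCard] at hU
    apply union_sdiff_cancel_right
    rw [Finset.disjoint_left]
    intro x hx
    have := hU.1 hx
    simpa [mem_compl] using this

lemma count_supersets_zero [Fintype α] (t : ℕ) (S : Finset α) (h : t < S.card) :
    ((powersetCard t (univ : Finset α)).filter (fun T => S ⊆ T)).card = 0 := by
  rw [card_eq_zero, filter_eq_empty_iff]
  intro T hT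
  simp only [mem_powersetCard] at hT
  intro hST
  have := card_le_card hST
  omega


section Code

variable {F : Type*} [Field F] [Fintype F] [DecidableEq F] {n k : ℕ}

def supp (c : Fin n → F) : Finset (Fin n) := univ.filter (fun i => c i ≠ 0)

lemma mem_supp {c : Fin n → F} {i : Fin n} : i ∈ supp c ↔ c i ≠ 0 := by
  simp [supp]

lemma norm_eq_supp_card (c : Fin n → F) : hammingNorm c = (supp c).card := by
  rfl

lemma supp_eq_empty {c : Fin n → F} : supp c = ∅ ↔ c = 0 := by
  simp only [Finset.eq_empty_iff_forall_notMem, mem_supp, not_not]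
  constructor
  · intro h; funext i; exact h i
  · intro h i; rw [h]; rfl

variable (C : Submodule F (Fin n → F)) [DecidablePred (· ∈ C)]

noncomputable def Dfin (S : Finset (Fin n)) : Finset (Fin n → F) :=
  univ.filter (fun c => c ∈ C ∧ supp c ⊆ S)

noncomputable def Efin (S : Finset (Fin n)) : Finset (Fin n → F) :=
  univ.filter (fun c => c ∈ C ∧ supp c = S)

lemma D_partition (S : Finset (Fin n)) :
    (Dfin C S).card = ∑ R ∈ S.powerset, (Efin C R).card := by
  rw [card_eq_sum_card_fiberwise (f := supp) (t := S.powerset)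
      (fun c hc => mem_powerset.2 (by simp only [Dfin, mem_coe, mem_filter] at hc; exact hc.2.2))]
  refine sum_congr rfl fun R hR => ?_
  congr 1
  ext c
  simp only [Dfin, Efin, mem_filter, mem_powerset] at *
  constructor
  · rintro ⟨⟨_, h1, _⟩, h2⟩; exact ⟨mem_univ c, h1, h2⟩
  · rintro ⟨_, h1, h2⟩; exact ⟨⟨mem_univ c, h1, h2 ▸ hR⟩, h2⟩

lemma A_partition (t : ℕ) :
    (univ.filter (fun c => c ∈ C ∧ hammingNorm c = t)).card
      = ∑ S ∈ powersetCard t (univ : Finset (Fin n)), (Efin C S).card := by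
  rw [card_eq_sum_card_fiberwise (f := supp) (t := powersetCard t univ)
      (fun c hc => by
        simp only [mem_coe, mem_filter] at hc
        simp only [mem_coe, mem_powersetCard]
        exact ⟨subset_univ _, by rw [← norm_eq_supp_card]; exact hc.2.2⟩)]
  refine sum_congr rfl fun S hS => ?_
  simp only [mem_powersetCard] at hS
  congr 1
  ext c
  simp only [Efin, mem_filter]
  constructor
  · rintro ⟨⟨_, h1, _⟩, h2⟩; exact ⟨mem_univ c, h1, h2⟩
  · rintro ⟨_, h1, h2⟩
    exact ⟨⟨mem_univ c, h1, by rw [norm_eq_supp_card, h2, hS.2]⟩, h2⟩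

lemma E_empty : (Efin C ∅).card = 1 := by
  have : Efin C ∅ = {0} := by
    ext c
    simp only [Efin, mem_filter, mem_univ, true_and, mem_singleton, supp_eq_empty]
    exact ⟨fun h => h.2, fun h => ⟨h ▸ C.zero_mem, h⟩⟩
  rw [this, card_singleton]

lemma E_zero (hminle : ∀ c ∈ C, c ≠ 0 → n - k ≤ hammingNorm c)
    (S : Finset (Fin n)) (h1 : 0 < S.card) (h2 : S.card < n - k) :
    (Efin C S).card = 0 := by
  rw [card_eq_zero, Efin, filter_eq_empty_iff]
  rintro c - ⟨hc, hsupp⟩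
  have hne : c ≠ 0 := by
    intro h0
    rw [h0, supp_eq_empty.2 rfl] at hsupp
    rw [← hsupp] at h1
    simp at h1
  have := hminle c hc hne
  rw [norm_eq_supp_card, hsupp] at this
  omega

lemma D_small (hminle : ∀ c ∈ C, c ≠ 0 → n - k ≤ hammingNorm c)
    (S : Finset (Fin n)) (h : S.card < n - k) :
    (Dfin C S).card = 1 := by
  have : Dfin C S = {0} := by
    ext c
    simp only [Dfin, mem_filter, mem_univ, true_and, mem_singleton]
    constructor
    · rintro ⟨hc, hsupp⟩
      by_contra hne
      have h1 := hminle c hc hne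
      have h2 := card_le_card hsupp
      rw [norm_eq_supp_card] at h1
      omega
    · intro h0
      refine ⟨h0 ▸ C.zero_mem, ?_⟩
      rw [h0, supp_eq_empty.2 rfl]
      exact empty_subset S
  rw [this, card_singleton]

lemma D_mid (hnk : 0 < n - k)
    (hminle : ∀ c ∈ C, c ≠ 0 → n - k ≤ hammingNorm c)
    (S : Finset (Fin n)) (h : S.card = n - k) :
    (Dfin C S).card = 1 + (Efin C S).card := by
  rw [D_partition]
  have hSne : S ≠ ∅ := by
    intro h0; rw [h0] at h; simp at h; omega
  have hsub : ({∅, S} : Finset (Finset (Fin n))) ⊆ S.powerset := by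
    intro R hR
    simp only [mem_insert, mem_singleton] at hR
    rcases hR with h0 | h0 <;> rw [h0]
    · exact mem_powerset.2 (empty_subset S)
    · exact mem_powerset_self S
  rw [← sum_subset hsub]
  · have hne2 : (∅ : Finset (Fin n)) ≠ S := fun h0 => hSne h0.symm
    rw [sum_pair hne2, E_empty]
  · intro R hR hRne
    simp only [mem_insert, mem_singleton, not_or] at hRne
    rw [mem_powerset] at hR
    apply E_zero C hminle
    · rw [Nat.pos_iff_ne_zero]
      intro h0
      exact hRne.1 (card_eq_zero.1 h0)
    · have hlt : R ⊂ S := Finset.ssubset_iff_subset_ne.2 ⟨hR, hRne.2⟩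
      have := card_lt_card hlt
      omega



lemma D_big (hk : 0 < k) (hkn : k < n)
    (hdim : Module.finrank F C = k)
    (hdualle : ∀ v : Fin n → F, (∀ c ∈ C, ∑ j, v j * c j = 0) → v ≠ 0 → k ≤ hammingNorm v)
    (T : Finset (Fin n)) (hT : n - k + 1 ≤ T.card) :
    (Dfin C T).card = Fintype.card F ^ (T.card - (n - k)) := by
  classical
  set W : Finset (Fin n) := Tᶜ with hWdef
  have hTn : T.card ≤ n := by simpa using card_le_univ T
  have hWcard : W.card = n - T.card := by
    rw [hWdef, card_compl]; simp
  have hWlt : W.card < k := by omega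
  let π : C →ₗ[F] (↥W → F) :=
    (LinearMap.funLeft F F (fun j : ↥W => (j : Fin n))).comp C.subtype
  have hπ : ∀ (x : ↥C) (j : ↥W), π x j = (x : Fin n → F) j := fun x j => rfl
  have hsurj : Function.Surjective π := by
    rw [← LinearMap.range_eq_top]
    by_contra hne
    obtain ⟨φ, φ0, hφ⟩ :=
      Submodule.exists_dual_map_eq_bot_of_lt_top (lt_top_iff_ne_top.2 hne) inferInstance
    set v : Fin n → F :=
      fun i => if h : i ∈ W then φ (fun j => if (⟨i, h⟩ : ↥W) = j then 1 else 0) else 0 with hv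
    have hvW : ∀ i, i ∉ W → v i = 0 := fun i hi => dif_neg hi
    have hvj : ∀ j : ↥W, v ↑j = φ (fun i => if j = i then 1 else 0) := by
      intro j
      rw [hv]
      simp only [dif_pos j.2, Subtype.coe_eta]
    have hzero : ∀ y ∈ LinearMap.range π, φ y = 0 := by
      intro y hy
      have : φ y ∈ (LinearMap.range π).map φ := Submodule.mem_map_of_mem hy
      rw [hφ] at this
      exact (Submodule.mem_bot F).1 this
    have hdual : ∀ c ∈ C, ∑ j, v j * c j = 0 := by
      intro c hc
      have hsum : ∑ j, v j * c j = ∑ j ∈ W, v j * c j := by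
        apply (sum_subset (subset_univ W) _).symm
        intro i _ hi
        rw [hvW i hi, zero_mul]
      rw [hsum, ← Finset.sum_coe_sort W (fun j => v j * c j)]
      have heach : ∀ j : ↥W, v ↑j * c ↑j
          = (π ⟨c, hc⟩) j • φ (fun i => if j = i then 1 else 0) := by
        intro j
        rw [hvj j, hπ, smul_eq_mul, mul_comm]
      rw [Finset.sum_congr rfl (fun j _ => heach j)]
      rw [← LinearMap.pi_apply_eq_sum_univ φ (π ⟨c, hc⟩)]
      exact hzero _ (LinearMap.mem_range_self π _)
    have hvne : v ≠ 0 := by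
      intro hv0
      apply φ0
      apply LinearMap.ext
      intro y
      rw [LinearMap.pi_apply_eq_sum_univ φ y]
      simp only [LinearMap.zero_apply]
      apply Finset.sum_eq_zero
      intro j _
      rw [← hvj j, hv0]
      simp
    have hnorm : hammingNorm v ≤ W.card := by
      rw [norm_eq_supp_card]
      apply card_le_card
      intro i hi
      rw [mem_supp] at hi
      by_contra hiW
      exact hi (hvW i hiW)
    have := hdualle v hdual hvne
    omega
  have hrank : Module.finrank F ↥(LinearMap.ker π) = k - W.card := by
    have h1 := LinearMap.finrank_range_add_finrank_ker π
    rw [LinearMap.range_eq_top.2 hsurj, finrank_top, Module.finrank_pi,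
      Fintype.card_coe, hdim] at h1
    omega
  haveI : Fintype ↥(LinearMap.ker π) := Fintype.ofFinite _
  have hcard : Nat.card ↥(LinearMap.ker π) = Fintype.card F ^ (k - W.card) := by
    rw [Nat.card_eq_fintype_card, Module.card_eq_pow_finrank (K := F), hrank]
  have hDcard : (Dfin C T).card = Nat.card ↥(LinearMap.ker π) := by
    rw [Dfin, ← Fintype.card_subtype, ← Nat.card_eq_fintype_card]
    apply Nat.card_congr
    refine
      { toFun := fun c => ⟨⟨c.1, c.2.1⟩, ?_⟩
        invFun := fun x => ⟨x.1.1, x.1.2, ?_⟩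
        left_inv := fun c => rfl
        right_inv := fun x => rfl }
    · rw [LinearMap.mem_ker]
      funext j
      show (c.1 : Fin n → F) ↑j = 0
      by_contra h
      have h1 : ↑j ∈ supp c.1 := mem_supp.2 h
      have h2 := c.2.2 h1
      exact (Finset.mem_compl.1 j.2) h2
    · intro i hi
      rw [mem_supp] at hi
      by_contra hiT
      have hiW : i ∈ W := Finset.mem_compl.2 hiT
      have := congrFun (LinearMap.mem_ker.1 x.2) ⟨i, hiW⟩
      exact hi this
  rw [hDcard, hcard]
  congr 1
  omega


end Code


end NMDSaux
open Finset NMDSaux in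
theorem stmt_16 {F : Type*} [Field F] [Fintype F] [DecidableEq F] {n k : ℕ}
    (hk : 0 < k) (hkn : k < n)
    (C : Submodule F (Fin n → F)) (hdim : Module.finrank F C = k)
    (hminle : ∀ c ∈ C, c ≠ 0 → n - k ≤ hammingNorm c)
    (hminex : ∃ c ∈ C, c ≠ 0 ∧ hammingNorm c = n - k)
    (hdualle : ∀ v : Fin n → F, (∀ c ∈ C, ∑ j, v j * c j = 0) → v ≠ 0 → k ≤ hammingNorm v)
    (hdualex : ∃ v : Fin n → F, (∀ c ∈ C, ∑ j, v j * c j = 0) ∧ v ≠ 0 ∧ hammingNorm v = k)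
    (A : ℕ → ℕ)
    (hA : ∀ i, A i = Set.ncard {c : Fin n → F | c ∈ C ∧ hammingNorm c = i})
    (s : ℕ) (hs : 1 ≤ s) (hsk : s ≤ k) :
    (A (n - k + s) : ℤ) =
      (n.choose (k - s) : ℤ) *
          ∑ j ∈ Finset.range s,
            (-1) ^ j * ((n - k + s).choose j : ℤ) * ((Fintype.card F : ℤ) ^ (s - j) - 1) +
        (-1) ^ s * (k.choose s : ℤ) * (A (n - k) : ℤ) := by
  classical
  set q : ℤ := (Fintype.card F : ℤ) with hq
  set t : ℕ := n - k + s with htdef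
  have hkn' : k ≤ n := le_of_lt hkn
  have htn : t ≤ n := by omega
  have hst : s ≤ t := by omega
  have hnk0 : 0 < n - k := by omega
  have hnkt : n - k ≤ t := by omega
  -- A as a Finset card
  have hA' : ∀ i, A i = (univ.filter (fun c => c ∈ C ∧ hammingNorm c = i)).card := by
    intro i
    rw [hA i, Set.ncard_eq_toFinset_card', Set.toFinset_setOf]
  have hApart : ∀ i, (A i : ℤ)
      = ∑ S ∈ powersetCard i (univ : Finset (Fin n)), ((Efin C S).card : ℤ) := by
    intro i
    rw [hA' i, A_partition C i]
    exact Nat.cast_sum _ _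
  have hgpart : ∀ S : Finset (Fin n), ((Dfin C S).card : ℤ)
      = ∑ R ∈ S.powerset, ((Efin C R).card : ℤ) := by
    intro S
    rw [D_partition C S]
    exact Nat.cast_sum _ _
  have hmob : ∀ T : Finset (Fin n), ((Efin C T).card : ℤ)
      = ∑ S ∈ T.powerset, (-1 : ℤ) ^ (T.card - S.card) * ((Dfin C S).card : ℤ) :=
    mobius _ _ hgpart
  -- Step 1: expand A t
  have step1 : (A t : ℤ)
      = ∑ T ∈ powersetCard t (univ : Finset (Fin n)), ∑ S ∈ T.powerset,
          (-1 : ℤ) ^ (t - S.card) * ((Dfin C S).card : ℤ) := by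
    rw [hApart t]
    refine sum_congr rfl fun T hT => ?_
    rw [hmob T, (mem_powersetCard.1 hT).2]
  -- Step 2: swap
  rw [swap_powersetCard t (fun S => (-1 : ℤ) ^ (t - S.card) * ((Dfin C S).card : ℤ))] at step1
  -- Step 3: split by size
  rw [powerset_card_disjiUnion] at step1
  erw [sum_disjiUnion] at step1
  rw [show (univ : Finset (Fin n)).card = n by simp] at step1
  set W : ℕ → ℤ := fun i => ∑ S ∈ powersetCard i (univ : Finset (Fin n)), ((Dfin C S).card : ℤ)
    with hWdef
  have hinner : ∀ i ∈ range (n + 1),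
      (∑ S ∈ powersetCard i (univ : Finset (Fin n)),
        ((-1 : ℤ) ^ (t - S.card) * ((Dfin C S).card : ℤ))
          * (((powersetCard t (univ : Finset (Fin n))).filter (fun T => S ⊆ T)).card : ℤ))
      = if i ≤ t then (-1 : ℤ) ^ (t - i) * (((n - i).choose (t - i) : ℕ) : ℤ) * W i else 0 := by
    intro i _
    by_cases hit : i ≤ t
    · rw [if_pos hit]
      have heach : ∀ S ∈ powersetCard i (univ : Finset (Fin n)),
          ((-1 : ℤ) ^ (t - S.card) * ((Dfin C S).card : ℤ))
            * (((powersetCard t (univ : Finset (Fin n))).filter (fun T => S ⊆ T)).card : ℤ)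
          = ((-1 : ℤ) ^ (t - i) * (((n - i).choose (t - i) : ℕ) : ℤ))
              * ((Dfin C S).card : ℤ) := by
        intro S hS
        obtain ⟨-, hc⟩ := mem_powersetCard.1 hS
        rw [count_supersets t S (by omega), Fintype.card_fin, hc]
        ring
      rw [sum_congr rfl heach, ← mul_sum, hWdef, mul_assoc]
    · rw [if_neg hit]
      apply sum_eq_zero
      intro S hS
      obtain ⟨-, hc⟩ := mem_powersetCard.1 hS
      rw [count_supersets_zero t S (by omega)]
      simp
  rw [sum_congr rfl hinner] at step1
  have step4 : ∑ i ∈ range (n + 1),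
      (if i ≤ t then (-1 : ℤ) ^ (t - i) * (((n - i).choose (t - i) : ℕ) : ℤ) * W i else 0)
      = ∑ i ∈ range (t + 1), (-1 : ℤ) ^ (t - i) * (((n - i).choose (t - i) : ℕ) : ℤ) * W i := by
    rw [← sum_subset (by rw [range_subset_range]; omega : range (t + 1) ⊆ range (n + 1))
        (fun i hi1 hi2 => by rw [if_neg (by simp only [mem_range] at hi1 hi2 ⊢; omega)])]
    refine sum_congr rfl fun i hi => ?_
    rw [if_pos (by simp only [mem_range] at hi; omega)]
  rw [step4] at step1
  -- Evaluate W
  set X : ℕ → ℤ := fun i =>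
      if n - k < i then (n.choose i : ℤ) * q ^ (i - (n - k)) else (n.choose i : ℤ) with hX
  have hW : ∀ i ∈ range (t + 1),
      W i = X i + (if i = n - k then (A (n - k) : ℤ) else 0) := by
    intro i hi
    rw [mem_range] at hi
    rcases Nat.lt_trichotomy i (n - k) with h | h | h
    · have heach : ∀ S ∈ powersetCard i (univ : Finset (Fin n)),
          ((Dfin C S).card : ℤ) = 1 := by
        intro S hS
        obtain ⟨-, hc⟩ := mem_powersetCard.1 hS
        rw [D_small C hminle S (by omega)]
        norm_num
      rw [hWdef]
      dsimp only
      rw [sum_congr rfl heach, sum_const, card_powersetCard, card_univ, Fintype.card_fin]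
      simp only [hX]
      rw [if_neg (by omega), if_neg (by omega)]
      simp
    · subst h
      have heach : ∀ S ∈ powersetCard (n - k) (univ : Finset (Fin n)),
          ((Dfin C S).card : ℤ) = 1 + ((Efin C S).card : ℤ) := by
        intro S hS
        obtain ⟨-, hc⟩ := mem_powersetCard.1 hS
        rw [D_mid C hnk0 hminle S (by omega)]
        push_cast
        ring
      rw [hWdef]
      dsimp only
      rw [sum_congr rfl heach, sum_add_distrib, sum_const, card_powersetCard, card_univ,
        Fintype.card_fin, ← hApart]
      simp only [hX]
      rw [if_neg (by omega)]
      simp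
    · have heach : ∀ S ∈ powersetCard i (univ : Finset (Fin n)),
          ((Dfin C S).card : ℤ) = q ^ (i - (n - k)) := by
        intro S hS
        obtain ⟨-, hc⟩ := mem_powersetCard.1 hS
        rw [D_big C hk hkn hdim hdualle S (by omega), hc, hq]
        push_cast
        ring
      rw [hWdef]
      dsimp only
      rw [sum_congr rfl heach, sum_const, card_powersetCard, card_univ, Fintype.card_fin]
      simp only [hX]
      rw [if_pos h, if_neg (by omega)]
      rw [nsmul_eq_mul]
      ring
  -- split off the A (n-k) part
  have hsplit : ∑ i ∈ range (t + 1),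
        (-1 : ℤ) ^ (t - i) * (((n - i).choose (t - i) : ℕ) : ℤ) * W i
      = (∑ i ∈ range (t + 1), (-1 : ℤ) ^ (t - i) * (((n - i).choose (t - i) : ℕ) : ℤ) * X i)
        + (-1 : ℤ) ^ s * ((k.choose s : ℕ) : ℤ) * (A (n - k) : ℤ) := by
    have h1 : ∀ i ∈ range (t + 1),
        (-1 : ℤ) ^ (t - i) * (((n - i).choose (t - i) : ℕ) : ℤ) * W i
        = (-1 : ℤ) ^ (t - i) * (((n - i).choose (t - i) : ℕ) : ℤ) * X i
          + (-1 : ℤ) ^ (t - i) * (((n - i).choose (t - i) : ℕ) : ℤ)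
              * (if i = n - k then (A (n - k) : ℤ) else 0) := by
      intro i hi
      rw [hW i hi]
      ring
    rw [sum_congr rfl h1, sum_add_distrib]
    congr 1
    rw [Finset.sum_eq_single (n - k)]
    · rw [if_pos rfl, show t - (n - k) = s from by omega, show n - (n - k) = k from by omega]
    · intro i _ hne
      rw [if_neg hne, mul_zero]
    · intro habs
      exact absurd (mem_range.2 (by omega)) habs
  rw [hsplit] at step1
  -- reflect the main sum
  have hrefl := Finset.sum_range_reflect
    (fun i => (-1 : ℤ) ^ (t - i) * (((n - i).choose (t - i) : ℕ) : ℤ) * X i) (t + 1)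
  simp only [Nat.add_sub_cancel] at hrefl
  rw [← hrefl] at step1
  -- per-term evaluation
  have hterm : ∀ j ∈ range (t + 1),
      (-1 : ℤ) ^ (t - (t - j)) * (((n - (t - j)).choose (t - (t - j)) : ℕ) : ℤ) * X (t - j)
      = (n.choose t : ℤ) * ((-1 : ℤ) ^ j * (t.choose j : ℤ))
        + (if j < s then
            (n.choose (k - s) : ℤ)
              * ((-1 : ℤ) ^ j * ((t.choose j : ℕ) : ℤ) * (q ^ (s - j) - 1)) else 0) := by
    intro j hj
    rw [mem_range] at hj
    have hjt : j ≤ t := by omega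
    have e3 : t - (t - j) = j := by omega
    rw [e3]
    have idA : (n - (t - j)).choose j * n.choose (t - j) = n.choose t * t.choose j := by
      have h1 := Nat.choose_mul (n := n) (show t - j ≤ t by omega)
      rw [show t - (t - j) = j from e3, Nat.choose_symm hjt] at h1
      rw [mul_comm]
      exact h1.symm
    have idA' : (((n - (t - j)).choose j : ℕ) : ℤ) * ((n.choose (t - j) : ℕ) : ℤ)
        = ((n.choose t : ℕ) : ℤ) * ((t.choose j : ℕ) : ℤ) := by exact_mod_cast idA
    by_cases hjs : j < s
    · rw [if_pos hjs]
      have idB : n.choose (t - j) * (n - (t - j)).choose j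
          = n.choose (k - s) * ((n - k + s).choose j) := by
        have e4 : n - (t - j) = k - s + j := by omega
        have e5 : t - j = n - (k - s + j) := by omega
        rw [e4, e5, Nat.choose_symm (show k - s + j ≤ n by omega)]
        have h2 := Nat.choose_mul (n := n)
          (show k - s ≤ k - s + j by omega)
        rw [show n - (k - s) = n - k + s from by omega,
          show k - s + j - (k - s) = j from by omega] at h2
        rw [← h2]
        congr 1
        have h3 := Nat.choose_symm (show j ≤ k - s + j by omega)
        rw [show k - s + j - j = k - s from by omega] at h3
        exact h3.symm
      have idB' : ((n.choose (t - j) : ℕ) : ℤ) * (((n - (t - j)).choose j : ℕ) : ℤ)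
          = ((n.choose (k - s) : ℕ) : ℤ) * (((n - k + s).choose j : ℕ) : ℤ) := by
        exact_mod_cast idB
      rw [← htdef] at idB'
      have hXv : X (t - j) = (n.choose (t - j) : ℤ) * q ^ (s - j) := by
        simp only [hX]
        rw [if_pos (show n - k < t - j by omega), show t - j - (n - k) = s - j from by omega]
      rw [hXv]
      linear_combination ((-1 : ℤ) ^ j) * idA' + ((-1 : ℤ) ^ j * (q ^ (s - j) - 1)) * idB'
    · rw [if_neg hjs]
      have hXv : X (t - j) = (n.choose (t - j) : ℤ) := by
        simp only [hX]
        rw [if_neg (by omega)]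
      rw [hXv, add_zero]
      linear_combination ((-1 : ℤ) ^ j) * idA'
  rw [sum_congr rfl hterm, sum_add_distrib, ← mul_sum,
    Int.alternating_sum_range_choose_of_ne (show t ≠ 0 by omega), mul_zero, zero_add] at step1
  have hrestrict : ∑ j ∈ range (t + 1),
      (if j < s then
        (n.choose (k - s) : ℤ)
          * ((-1 : ℤ) ^ j * ((t.choose j : ℕ) : ℤ) * (q ^ (s - j) - 1)) else 0)
      = ∑ j ∈ range s,
        (n.choose (k - s) : ℤ)
          * ((-1 : ℤ) ^ j * ((t.choose j : ℕ) : ℤ) * (q ^ (s - j) - 1)) := by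
    rw [← sum_subset (by rw [range_subset_range]; omega : range s ⊆ range (t + 1))
        (fun j hj1 hj2 => by rw [if_neg (by simp only [mem_range] at hj1 hj2 ⊢; omega)])]
    refine sum_congr rfl fun j hj => ?_
    rw [if_pos (by simp only [mem_range] at hj; omega)]
  rw [hrestrict, ← mul_sum] at step1
  rw [step1]
end

section
/- Let q = 2^m with m ≥ 3 odd. For x ∈ F_q \ {0,1}, set a = x^2/(x+1). Then a ∉ {0, 1}, and the number of unordered pairs {x, y} of distinct elements of F_q^* with (x+1)y^2 + (y+1)x^2 = 0 is exactly (q−2)/2. -/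
theorem stmt_18 {F : Type*} [Field F] [Fintype F] (m : ℕ) (hm : 3 ≤ m) (hodd : Odd m)
    (hcard : Fintype.card F = 2 ^ m) :
    (∀ x : F, x ≠ 0 → x ≠ 1 → x ^ 2 / (x + 1) ≠ 0 ∧ x ^ 2 / (x + 1) ≠ 1) ∧
    Set.ncard {s : Finset F | s.card = 2 ∧ ∃ x ∈ s, ∃ y ∈ s, x ≠ y ∧
        x ≠ 0 ∧ y ≠ 0 ∧ (x + 1) * y ^ 2 + (y + 1) * x ^ 2 = 0} =
      (2 ^ m - 2) / 2 := by
  -- characteristic 2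
  have hchar2 : ringChar F = 2 := by
    haveI := ringChar.charP F
    obtain ⟨n, hp, hq⟩ := FiniteField.card F (ringChar F)
    have hd : ringChar F ∣ 2 ^ m := by
      rw [← hcard, hq]; exact dvd_pow_self _ n.ne_zero
    exact (Nat.prime_dvd_prime_iff_eq hp Nat.prime_two).mp (hp.dvd_of_dvd_pow hd)
  have hchar : (2 : F) = 0 := by
    have := CharP.cast_eq_zero F (ringChar F)
    rw [hchar2] at this; exact_mod_cast this
  have haddone : ∀ z : F, z ≠ 1 → z + 1 ≠ 0 := by
    intro z hz h
    exact hz (by linear_combination h - hchar)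
  -- key algebraic equivalence
  have key : ∀ x y : F, x ≠ y →
      ((x + 1) * y ^ 2 + (y + 1) * x ^ 2 = 0 ↔ x * y + x + y = 0) := by
    intro x y hxy
    constructor
    · intro h
      have hfac : (x + y) * (x * y + x + y) = 0 := by
        linear_combination h + (x * y) * hchar
      have hxy0 : x + y ≠ 0 := by
        intro h0
        exact hxy (by linear_combination h0 - y * hchar)
      rcases mul_eq_zero.mp hfac with h' | h'
      · exact absurd h' hxy0
      · exact h'
    · intro h
      linear_combination (x + y) * h - (x * y) * hchar
  constructor
  · -- first part
    intro x hx0 hx1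
    have hx1' : x + 1 ≠ 0 := haddone x hx1
    refine ⟨div_ne_zero (pow_ne_zero 2 hx0) hx1', ?_⟩
    intro h
    have hx2 : x ^ 2 = x + 1 := by
      rw [div_eq_one_iff_eq hx1'] at h; exact h
    have h3 : x ^ 3 = 1 := by linear_combination (x + 1) * hx2 + x * hchar
    have ho3 : orderOf x = 3 := by
      have hdvd := orderOf_dvd_of_pow_eq_one h3
      rcases Nat.prime_three.eq_one_or_self_of_dvd _ hdvd with h1 | h3'
      · exact absurd (orderOf_eq_one_iff.mp h1) hx1
      · exact h3'
    have hdvd2 : (3 : ℕ) ∣ 2 ^ m - 1 := by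
      rw [← ho3, ← hcard]
      exact orderOf_dvd_of_pow_eq_one (FiniteField.pow_card_sub_one_eq_one x hx0)
    obtain ⟨k, hk⟩ := hodd
    subst hk
    have hpow : 2 ^ (2 * k + 1) = 2 * 4 ^ k := by
      rw [pow_succ, pow_mul]; ring
    have h4 : 4 ^ k % 3 = 1 := by rw [Nat.pow_mod]; simp
    have h4pos : 0 < 4 ^ k := pow_pos (by norm_num) k
    rw [hpow] at hdvd2
    omega
  · -- counting part
    classical
    set P : Finset F → Prop := fun s => s.card = 2 ∧ ∃ x ∈ s, ∃ y ∈ s, x ≠ y ∧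
        x ≠ 0 ∧ y ≠ 0 ∧ (x + 1) * y ^ 2 + (y + 1) * x ^ 2 = 0 with hP
    set T : Finset (Finset F) := Finset.univ.filter P with hT
    have hset : {s : Finset F | P s} = ↑T := by
      ext s; simp [hT]
    rw [hset, Set.ncard_coe_finset]
    set A : Finset F := Finset.univ.filter (fun x : F => x ≠ 0 ∧ x ≠ 1) with hA
    set g : F → Finset F := fun x => {x, x / (x + 1)} with hg
    have hmap : ∀ x ∈ A, g x ∈ T := by
      intro x hx
      rw [hA, Finset.mem_filter] at hx
      obtain ⟨-, hx0, hx1⟩ := hx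
      have hx1' : x + 1 ≠ 0 := haddone x hx1
      set y := x / (x + 1) with hy
      have hyx : y * (x + 1) = x := div_mul_cancel₀ x hx1'
      have hy0 : y ≠ 0 := div_ne_zero hx0 hx1'
      have hne : y ≠ x := by
        intro h
        rw [h] at hyx
        exact hx0 (pow_eq_zero_iff (n := 2) (by norm_num) |>.mp
          (by linear_combination hyx))
      have heq : x * y + x + y = 0 := by linear_combination hyx + x * hchar
      rw [hT, Finset.mem_filter]
      refine ⟨Finset.mem_univ _, Finset.card_pair hne.symm, x, ?_, y, ?_, hne.symm,
        hx0, hy0, (key x y hne.symm).mpr heq⟩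
      · exact Finset.mem_insert_self x _
      · exact Finset.mem_insert_of_mem (Finset.mem_singleton_self y)
    have hfiber : ∀ s ∈ T, A.filter (fun z => g z = s) = s := by
      intro s hs
      rw [hT, Finset.mem_filter] at hs
      obtain ⟨-, hscard, x, hxs, y, hys, hxy, hx0, hy0, heq0⟩ := hs
      have heq : x * y + x + y = 0 := (key x y hxy).mp heq0
      have hx1 : x ≠ 1 := by
        intro h; rw [h] at heq
        exact one_ne_zero (α := F) (by linear_combination heq - y * hchar)
      have hy1 : y ≠ 1 := by
        intro h; rw [h] at heq
        exact one_ne_zero (α := F) (by linear_combination heq - x * hchar)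
      have hx1' : x + 1 ≠ 0 := haddone x hx1
      have hy1' : y + 1 ≠ 0 := haddone y hy1
      have hyx : y = x / (x + 1) := by
        rw [eq_div_iff hx1']; linear_combination heq - x * hchar
      have hxy' : x = y / (y + 1) := by
        rw [eq_div_iff hy1']; linear_combination heq - y * hchar
      have hs2 : s = {x, y} := by
        refine (Finset.eq_of_subset_of_card_le
          (Finset.insert_subset hxs (Finset.singleton_subset_iff.mpr hys)) ?_).symm
        rw [hscard, Finset.card_pair hxy]
      ext z
      rw [Finset.mem_filter, hA, Finset.mem_filter]
      constructor
      · rintro ⟨-, hz⟩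
        rw [← hz, hg]
        exact Finset.mem_insert_self z _
      · intro hzs
        rw [hs2] at hzs
        rcases Finset.mem_insert.mp hzs with h | h
        · refine ⟨⟨Finset.mem_univ _, by rw [h]; exact hx0, by rw [h]; exact hx1⟩, ?_⟩
          rw [h]
          show ({x, x / (x + 1)} : Finset F) = s
          rw [hs2, ← hyx]
        · rw [Finset.mem_singleton] at h
          refine ⟨⟨Finset.mem_univ _, by rw [h]; exact hy0, by rw [h]; exact hy1⟩, ?_⟩
          rw [h]
          show ({y, y / (y + 1)} : Finset F) = s
          rw [hs2, ← hxy', Finset.pair_comm]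
    have hcount : A.card = ∑ s ∈ T, (A.filter (fun z => g z = s)).card :=
      Finset.card_eq_sum_card_fiberwise hmap
    have hsum : ∑ s ∈ T, (A.filter (fun z => g z = s)).card = 2 * T.card := by
      have h2 : ∀ s ∈ T, (A.filter (fun z => g z = s)).card = 2 := by
        intro s hs
        rw [hfiber s hs]
        exact (Finset.mem_filter.mp hs).2.1
      rw [Finset.sum_congr rfl h2, Finset.sum_const, smul_eq_mul, mul_comm]
    have hAcard : A.card = 2 ^ m - 2 := by
      have h01 : (0 : F) ≠ 1 := zero_ne_one
      have hAeq : A = Finset.univ \ {0, 1} := by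
        ext z
        simp [hA, and_comm, not_or]
      rw [hAeq, Finset.card_sdiff_of_subset (Finset.subset_univ _), Finset.card_univ, hcard]
      congr 1
      rw [Finset.card_insert_of_notMem (by simp [h01]), Finset.card_singleton]
    have hfin : 2 ^ m - 2 = T.card * 2 := by omega
    exact (Nat.div_eq_of_eq_mul_left (by norm_num) hfin).symm
end
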